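/- For every even integer q ≥ 2 and every positive integer v with 2v = q¹⁶(q⁸+q⁴+1)(q⁶−1)(q²−1), the number gcd( 2q⁸(q⁸−1)(q⁴−1) , v − 1 ) divides 50·(q⁴+1). -/

import Mathlib

/-- For every even integer `q ≥ 2` and every positive integer `v` with
`2v = q¹⁶(q⁸+q⁴+1)(q⁶-1)(q²-1)`, the number `gcd(2q⁸(q⁸-1)(q⁴-1), v-1)`
divides `50(q⁴+1)`. -/
theorem f4_sp4q2_gcd (q v : ℕ) (hq : 2 ≤ q) (hqe : Even q) (hv : 0 < v)
    (h2v : 2 * v = q ^ 16 * (q ^ 8 + q ^ 4 + 1) * (q ^ 6 - 1) * (q ^ 2 - 1)) :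
    Nat.gcd (2 * q ^ 8 * (q ^ 8 - 1) * (q ^ 4 - 1)) (v - 1) ∣ 50 * (q ^ 4 + 1) := by
  obtain ⟨k, hk⟩ := hqe
  have hk1 : 1 ≤ k := by omega
  have hq2 : 4 ≤ q ^ 2 := by nlinarith
  have hq4 : 4 ≤ q ^ 4 := by nlinarith
  have hq6 : 4 ≤ q ^ 6 := by nlinarith
  have hq8 : 4 ≤ q ^ 8 := by nlinarith
  -- rewrite v explicitly
  have hveq : v = 2 ^ 15 * k ^ 16 * ((q ^ 8 + q ^ 4 + 1) * ((q ^ 6 - 1) * (q ^ 2 - 1))) := by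
    apply Nat.eq_of_mul_eq_mul_left (show 0 < 2 by norm_num)
    rw [h2v, hk]; ring
  have hRpos : 1 ≤ (q ^ 8 + q ^ 4 + 1) * ((q ^ 6 - 1) * (q ^ 2 - 1)) := by
    have h2 : 1 ≤ (q ^ 6 - 1) * (q ^ 2 - 1) :=
      Nat.one_le_iff_ne_zero.mpr (Nat.mul_ne_zero (by omega) (by omega))
    calc 1 = 1 * 1 := by norm_num
    _ ≤ _ := Nat.mul_le_mul (by omega) h2
  have hv6 : 6 ≤ v := by
    have : 2 ^ 15 * 1 * 1 ≤
        2 ^ 15 * k ^ 16 * ((q ^ 8 + q ^ 4 + 1) * ((q ^ 6 - 1) * (q ^ 2 - 1))) :=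
      Nat.mul_le_mul (Nat.mul_le_mul le_rfl (Nat.one_le_pow _ _ (by omega))) hRpos
    omega
  -- helper : anything dividing v is coprime to v - 1
  have hcop : ∀ m : ℕ, m ∣ v → Nat.Coprime m (v - 1) := by
    intro m hm
    have h1 : Nat.gcd m (v - 1) ∣ v := dvd_trans (Nat.gcd_dvd_left _ _) hm
    have h2 : Nat.gcd m (v - 1) ∣ v - 1 := Nat.gcd_dvd_right _ _
    have h3 : Nat.gcd m (v - 1) ∣ v - (v - 1) := Nat.dvd_sub h1 h2
    have hvv : v - (v - 1) = 1 := by omega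
    rw [hvv] at h3
    exact Nat.eq_one_of_dvd_one h3
  -- divisors of v
  have hdvd2 : 2 ∣ v := ⟨2 ^ 14 * k ^ 16 * ((q ^ 8 + q ^ 4 + 1) * ((q ^ 6 - 1) * (q ^ 2 - 1))),
    by rw [hveq]; ring⟩
  have hdvdq8 : q ^ 8 ∣ v :=
    ⟨2 ^ 7 * k ^ 8 * ((q ^ 8 + q ^ 4 + 1) * ((q ^ 6 - 1) * (q ^ 2 - 1))),
      by rw [hveq, hk]; ring⟩
  have hdvdm : q ^ 2 - 1 ∣ v :=
    ⟨2 ^ 15 * k ^ 16 * ((q ^ 8 + q ^ 4 + 1) * (q ^ 6 - 1)), by rw [hveq]; ring⟩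
  -- q^2 + 1 divides v - 6
  have hzv : (2 : ℤ) * (v : ℤ) =
      (q : ℤ) ^ 16 * ((q : ℤ) ^ 8 + (q : ℤ) ^ 4 + 1) * ((q : ℤ) ^ 6 - 1) * ((q : ℤ) ^ 2 - 1) := by
    have h6 : 1 ≤ q ^ 6 := by omega
    have h2 : 1 ≤ q ^ 2 := by omega
    zify [h6, h2] at h2v
    exact_mod_cast h2v
  have hdvd5' : q ^ 2 + 1 ∣ 2 * (v - 6) := by
    have hint : ((q : ℤ) ^ 2 + 1) ∣ 2 * ((v : ℤ) - 6) := by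
      refine ⟨(q:ℤ)^30 - 2*(q:ℤ)^28 + 3*(q:ℤ)^26 - 5*(q:ℤ)^24 + 7*(q:ℤ)^22 - 9*(q:ℤ)^20
        + 10*(q:ℤ)^18 - 11*(q:ℤ)^16 + 12*(q:ℤ)^14 - 12*(q:ℤ)^12 + 12*(q:ℤ)^10 - 12*(q:ℤ)^8
        + 12*(q:ℤ)^6 - 12*(q:ℤ)^4 + 12*(q:ℤ)^2 - 12, ?_⟩
      linear_combination hzv
    zify [hv6]
    exact hint
  have hdvd6 : q ^ 2 + 1 ∣ v - 6 := by
    have hodd : Nat.Coprime (q ^ 2 + 1) 2 := by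
      have hqk : q ^ 2 + 1 = 2 * (2 * k ^ 2) + 1 := by rw [hk]; ring
      exact Nat.coprime_two_right.mpr ⟨2 * k ^ 2, hqk⟩
    exact hodd.dvd_of_dvd_mul_left hdvd5'
  -- gcd (q^2+1) (v-1) divides 5
  have hg5 : Nat.gcd (q ^ 2 + 1) (v - 1) ∣ 5 := by
    have h1 : Nat.gcd (q ^ 2 + 1) (v - 1) ∣ v - 1 := Nat.gcd_dvd_right _ _
    have h2 : Nat.gcd (q ^ 2 + 1) (v - 1) ∣ v - 6 :=
      dvd_trans (Nat.gcd_dvd_left _ _) hdvd6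
    have h3 : Nat.gcd (q ^ 2 + 1) (v - 1) ∣ (v - 1) - (v - 6) := Nat.dvd_sub h1 h2
    have : (v - 1) - (v - 6) = 5 := by omega
    rwa [this] at h3
  -- main factorization
  set g := Nat.gcd (2 * q ^ 8 * (q ^ 8 - 1) * (q ^ 4 - 1)) (v - 1) with hg
  have hgv : g ∣ v - 1 := Nat.gcd_dvd_right _ _
  have hfac : 2 * q ^ 8 * (q ^ 8 - 1) * (q ^ 4 - 1)
      = (2 * (q ^ 8 * (q ^ 2 - 1) ^ 2)) * ((q ^ 4 + 1) * (q ^ 2 + 1) ^ 2) := by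
    have h8 : 1 ≤ q ^ 8 := by omega
    have h4 : 1 ≤ q ^ 4 := by omega
    have h2 : 1 ≤ q ^ 2 := by omega
    zify [h8, h4, h2]
    ring
  have hgd : g ∣ (2 * (q ^ 8 * (q ^ 2 - 1) ^ 2)) * ((q ^ 4 + 1) * (q ^ 2 + 1) ^ 2) := by
    rw [← hfac]; exact Nat.gcd_dvd_left _ _
  -- g is coprime to the first factor
  have hcop1 : Nat.Coprime g (2 * (q ^ 8 * (q ^ 2 - 1) ^ 2)) := by
    have c2 : Nat.Coprime g 2 := Nat.Coprime.coprime_dvd_left hgv ((hcop 2 hdvd2).symm)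
    have c8 : Nat.Coprime g (q ^ 8) := Nat.Coprime.coprime_dvd_left hgv ((hcop _ hdvdq8).symm)
    have cm : Nat.Coprime g (q ^ 2 - 1) := Nat.Coprime.coprime_dvd_left hgv ((hcop _ hdvdm).symm)
    exact c2.mul_right (c8.mul_right (cm.pow_right 2))
  have hgd2 : g ∣ (q ^ 4 + 1) * (q ^ 2 + 1) ^ 2 := hcop1.dvd_of_dvd_mul_left hgd
  -- combine
  have hgd3 : g ∣ Nat.gcd (v - 1) ((q ^ 4 + 1) * (q ^ 2 + 1) ^ 2) := Nat.dvd_gcd hgv hgd2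
  have hsplit : Nat.gcd (v - 1) ((q ^ 4 + 1) * (q ^ 2 + 1) ^ 2) ∣
      Nat.gcd (v - 1) (q ^ 4 + 1) * Nat.gcd (v - 1) ((q ^ 2 + 1) ^ 2) :=
    Nat.gcd_mul_right_dvd_mul_gcd _ _ _
  have hsq : Nat.gcd (v - 1) ((q ^ 2 + 1) ^ 2) ∣ 25 := by
    have : Nat.gcd (v - 1) ((q ^ 2 + 1) * (q ^ 2 + 1)) ∣
        Nat.gcd (v - 1) (q ^ 2 + 1) * Nat.gcd (v - 1) (q ^ 2 + 1) :=
      Nat.gcd_mul_right_dvd_mul_gcd _ _ _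
    have h5 : Nat.gcd (v - 1) (q ^ 2 + 1) ∣ 5 := by
      rwa [Nat.gcd_comm] at hg5
    calc Nat.gcd (v - 1) ((q ^ 2 + 1) ^ 2)
        = Nat.gcd (v - 1) ((q ^ 2 + 1) * (q ^ 2 + 1)) := by rw [sq]
      _ ∣ Nat.gcd (v - 1) (q ^ 2 + 1) * Nat.gcd (v - 1) (q ^ 2 + 1) := this
      _ ∣ 5 * 5 := mul_dvd_mul h5 h5
  have final : g ∣ (q ^ 4 + 1) * 25 := by
    calc g ∣ Nat.gcd (v - 1) ((q ^ 4 + 1) * (q ^ 2 + 1) ^ 2) := hgd3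
      _ ∣ Nat.gcd (v - 1) (q ^ 4 + 1) * Nat.gcd (v - 1) ((q ^ 2 + 1) ^ 2) := hsplit
      _ ∣ (q ^ 4 + 1) * 25 := mul_dvd_mul (Nat.gcd_dvd_right _ _) hsq
  exact dvd_trans final ⟨2, by ring⟩
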